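/- Let K be a finite field of odd characteristic and d an odd natural number dividing |K| - 1. Then η_K(d) = sign(K)^{(d-1)/2}, where η_K is the quadratic character of K* and sign(K) = η_K(-1). -/

import Mathlib

open Classical

/-- For a finite field `K` of odd characteristic and `d` odd dividing `|K| - 1`,
`η_K(d) = sign(K)^((d-1)/2)`, `η_K` the quadratic character, `sign(K) = η_K(-1)`. -/
theorem stmt_7 {K : Type*} [Field K] [Fintype K] (hchar : ringChar K ≠ 2)
    (d : ℕ) (hd : Odd d) (hdvd : d ∣ Fintype.card K - 1)
    (η : MulChar K ℂ) (hη : η ≠ 1) (hη2 : η ^ 2 = 1) :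
    η ((d : K)) = (if IsSquare (-1 : K) then (1 : ℂ) else -1) ^ ((d - 1) / 2) := by
  -- η x ^ 2 = 1 for x ≠ 0
  have hsq : ∀ x : K, x ≠ 0 → η x ^ 2 = 1 := by
    intro x hx
    have hu : IsUnit x := isUnit_iff_ne_zero.mpr hx
    have h := congrArg (fun χ : MulChar K ℂ => χ x) hη2
    simp only [pow_two, MulChar.mul_apply, MulChar.one_apply hu] at h
    rw [pow_two]; exact h
  -- generator of Kˣ
  obtain ⟨g, hg⟩ := IsCyclic.exists_monoid_generator (α := Kˣ)
  have hgval : η (g : K) = -1 := by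
    have h2 : η (g : K) * η (g : K) = 1 := by
      have := hsq (g : K) g.ne_zero; rwa [pow_two] at this
    rcases mul_self_eq_one_iff.mp h2 with h | h
    · exfalso
      apply hη
      apply MulChar.ext
      intro a
      obtain ⟨n, hn⟩ := hg a
      rw [MulChar.one_apply_coe, ← hn, Units.val_pow_eq_pow_val, map_pow, h, one_pow]
    · exact h
  -- value at -1
  have hneg : η (-1 : K) = (if IsSquare (-1 : K) then (1 : ℂ) else -1) := by
    by_cases hs : IsSquare (-1 : K)
    · rw [if_pos hs]
      obtain ⟨b, hb⟩ := hs
      have hb0 : b ≠ 0 := by rintro rfl; simp at hb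
      rw [hb, map_mul, ← pow_two]
      exact hsq b hb0
    · rw [if_neg hs]
      obtain ⟨n, hn⟩ := hg (-1 : Kˣ)
      have hn' : g ^ n = (-1 : Kˣ) := hn
      have hcoe : ((g : K)) ^ n = -1 := by
        rw [← Units.val_pow_eq_pow_val, hn']; simp
      have hval : η (-1 : K) = (-1 : ℂ) ^ n := by
        rw [← hcoe, map_pow, hgval]
      have hodd : Odd n := by
        rw [← Nat.not_even_iff_odd]
        rintro ⟨t, ht⟩
        apply hs
        exact ⟨(g : K) ^ t, by rw [← hcoe, ht, pow_add]⟩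
      rw [hval, hodd.neg_one_pow]
  -- primitive d-th root of unity
  have hord : orderOf g = Fintype.card Kˣ := by
    rw [← Nat.card_eq_fintype_card]
    apply orderOf_eq_card_of_forall_mem_zpowers
    intro x
    obtain ⟨n, hn⟩ := hg x
    exact ⟨(n : ℤ), by simpa using hn⟩
  have hd0 : d ≠ 0 := by rintro rfl; simp at hd
  have hdvd' : d ∣ orderOf g := by
    rw [hord, Fintype.card_units]; exact hdvd
  have hordne : orderOf g ≠ 0 := by
    rw [hord]; exact Fintype.card_ne_zero
  set ζu : Kˣ := g ^ (orderOf g / d) with hζu_def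
  have hordζu : orderOf ζu = d := orderOf_pow_orderOf_div hordne hdvd'
  have hζu : IsPrimitiveRoot ζu d := hordζu ▸ IsPrimitiveRoot.orderOf ζu
  set ζ : K := (ζu : K) with hζ_def
  have hζ : IsPrimitiveRoot ζ d := IsPrimitiveRoot.coe_units_iff.mpr hζu
  have hζ0 : ζ ≠ 0 := ζu.ne_zero
  -- η ζ = 1
  have hηζ : η ζ = 1 := by
    have h2 : η ζ ^ 2 = 1 := hsq ζ hζ0
    have hdpow : η ζ ^ d = 1 := by rw [← map_pow, hζ.pow_eq_one, map_one]
    obtain ⟨t, ht⟩ := hd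
    calc η ζ = η ζ ^ (2 * t + 1) := by rw [pow_add, pow_mul, h2, one_pow, pow_one, one_mul]
    _ = η ζ ^ d := by rw [ht]
    _ = 1 := hdpow
  obtain ⟨m, hm⟩ := hd
  have hm2 : (d - 1) / 2 = m := by omega
  -- the pairing lemma
  have key : ∀ e : ℕ, 1 ≤ e → e < d → η (1 - ζ ^ e) * η (1 - ζ ^ (d - e)) = η (-1) := by
    intro e he1 he2
    set w : K := ζ ^ e with hw_def
    have hw0 : w ≠ 0 := pow_ne_zero _ hζ0
    have hw1 : w ≠ 1 := hζ.pow_ne_one_of_pos_of_lt (by omega) he2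
    have hne : (1 : K) - w ≠ 0 := sub_ne_zero.mpr (Ne.symm hw1)
    have hkey : ζ ^ (d - e) = w⁻¹ := by
      have h1 : ζ ^ (d - e) * w = 1 := by
        rw [hw_def, ← pow_add, Nat.sub_add_cancel (le_of_lt he2), hζ.pow_eq_one]
      exact eq_inv_of_mul_eq_one_left h1
    have hηw : η w = 1 := by rw [hw_def, map_pow, hηζ, one_pow]
    have hηwi : η w⁻¹ = 1 := by
      have : η w⁻¹ * η w = 1 := by rw [← map_mul, inv_mul_cancel₀ hw0, map_one]
      rwa [hηw, mul_one] at this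
    have halg : (1 - w) * (1 - w⁻¹) = (-1) * w⁻¹ * (1 - w) ^ 2 := by
      field_simp; ring
    rw [hkey, ← map_mul, halg, map_mul, map_mul, map_pow, hηwi, hsq _ hne, mul_one, mul_one]
  -- the product formula
  have hP : ∏ k ∈ Finset.range (2 * m), (1 - ζ ^ (k + 1)) = (d : K) := by
    have := (show IsPrimitiveRoot ζ (2 * m + 1) from hm ▸ hζ).prod_one_sub_pow_eq_order
    rw [this, hm]; push_cast; ring
  set F : ℕ → ℂ := fun k => η (1 - ζ ^ k) with hF_def
  have hmain : η ((d : K)) = ∏ k ∈ Finset.range (2 * m), F (k + 1) := by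
    rw [← hP, map_prod]
  have hsplit : ∏ k ∈ Finset.range (2 * m), F (k + 1)
      = (∏ k ∈ Finset.range m, F (k + 1)) * ∏ k ∈ Finset.range m, F (m + k + 1) := by
    rw [two_mul, Finset.prod_range_add]
  have hrefl : ∏ k ∈ Finset.range m, F (m + k + 1) = ∏ k ∈ Finset.range m, F (2 * m - k) := by
    rw [← Finset.prod_range_reflect (fun j => F (2 * m - j)) m]
    apply Finset.prod_congr rfl
    intro k hk
    rw [Finset.mem_range] at hk
    congr 1
    omega
  have hpair : (∏ k ∈ Finset.range m, F (k + 1)) * ∏ k ∈ Finset.range m, F (2 * m - k)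
      = η (-1) ^ m := by
    rw [← Finset.prod_mul_distrib]
    calc ∏ k ∈ Finset.range m, F (k + 1) * F (2 * m - k)
        = ∏ _k ∈ Finset.range m, η (-1) := by
          apply Finset.prod_congr rfl
          intro k hk
          rw [Finset.mem_range] at hk
          have h2mk : 2 * m - k = d - (k + 1) := by omega
          rw [h2mk]
          exact key (k + 1) (by omega) (by omega)
      _ = η (-1) ^ m := by rw [Finset.prod_const, Finset.card_range]
  rw [hmain, hsplit, hrefl, hpair, hneg, hm2]
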